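/- Let R(α,ζ,Δ) be the algebra defined in the context. Then R(α,ζ,Δ) is absolutely simple: for every field extension E/F, the algebra R(α,ζ,Δ) ⊗_F E is simple (its multiplication is nonzero and it has no two-sided ideals other than 0 and itself). -/

import Mathlib

set_option maxHeartbeats 1000000

open scoped TensorProduct

/-- (Remark on (4.2)(i),(ii) in Gordeev–Popov): with `P = R(α,ζ,Δ) = ⟨e⟩ ⊕ Z ⊕ R` the
algebra defined as in the context (|F| ≥ 4, `e` a left identity, `Z`, `R` eigenspaces of
right multiplication by `e` with nonzero eigenvalues `ζ ≠ α`, both ≠ 1, `R` a subalgebra,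
`Z` a subalgebra with zero multiplication, `a·z = 0`, `z·a = Δ(z,a)·e`), the algebra `P`
is absolutely simple: for every field extension `E/F` the algebra `P ⊗_F E` (with the
`E`-bilinear extension of the multiplication) is simple, i.e. its multiplication is
nonzero and its only two-sided ideals are `0` and the whole algebra. -/
theorem stmt11 {F R Z P : Type*} [Field F]
    [AddCommGroup R] [Module F R] [FiniteDimensional F R] [Nontrivial R]
    [AddCommGroup Z] [Module F Z] [FiniteDimensional F Z]
    [AddCommGroup P] [Module F P]
    (hF : (4 : Cardinal) ≤ Cardinal.mk F)
    (hdim : Module.finrank F Z = Module.finrank F R)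
    (mR : R →ₗ[F] R →ₗ[F] R)
    (α ζ : F) (hα0 : α ≠ 0) (hζ0 : ζ ≠ 0) (hα1 : α ≠ 1) (hζ1 : ζ ≠ 1) (hαζ : α ≠ ζ)
    (Δ : Z →ₗ[F] R →ₗ[F] F) (hΔ : Δ.Nondegenerate)
    (mul : P →ₗ[F] P →ₗ[F] P) (e : P)
    (jZ : Z →ₗ[F] P) (hjZ : Function.Injective jZ)
    (jR : R →ₗ[F] P) (hjR : Function.Injective jR)
    (hinternal : DirectSum.IsInternal
      ![Submodule.span F {e}, LinearMap.range jZ, LinearMap.range jR])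
    (hleft : ∀ x : P, mul e x = x)
    (hZe : ∀ z : Z, mul (jZ z) e = ζ • jZ z)
    (hRe : ∀ a : R, mul (jR a) e = α • jR a)
    (hRR : ∀ a b : R, mul (jR a) (jR b) = jR (mR a b))
    (hZZ : ∀ z w : Z, mul (jZ z) (jZ w) = 0)
    (hRZ : ∀ (a : R) (z : Z), mul (jR a) (jZ z) = 0)
    (hZR : ∀ (z : Z) (a : R), mul (jZ z) (jR a) = Δ z a • e) :
    ∀ (E : Type*) [Field E] [Algebra F E]
      (mE : E ⊗[F] P →ₗ[E] E ⊗[F] P →ₗ[E] E ⊗[F] P),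
      (∀ (a b : E) (x y : P),
          mE (a ⊗ₜ[F] x) (b ⊗ₜ[F] y) = (a * b) ⊗ₜ[F] mul x y) →
      mE ≠ 0 ∧
        ∀ I : Submodule E (E ⊗[F] P),
          (∀ x ∈ I, ∀ y : E ⊗[F] P, mE x y ∈ I ∧ mE y x ∈ I) → I = ⊥ ∨ I = ⊤ := by
  classical
  -- dual basis setup over F
  have hΔinj : Function.Injective Δ := by
    intro z w h
    have h0 : Δ (z - w) = 0 := by rw [map_sub, h, sub_self]
    have := hΔ.1 (z - w) (fun a => by rw [h0]; rfl)
    exact sub_eq_zero.mp this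
  let κ : Z ≃ₗ[F] Module.Dual F R :=
    Δ.linearEquivOfInjective hΔinj (hdim.trans Subspace.dual_finrank_eq.symm)
  let bR : Module.Basis (Fin (Module.finrank F R)) F R := Module.finBasis F R
  let bZ : Module.Basis (Fin (Module.finrank F R)) F Z := bR.dualBasis.map κ.symm
  have hΔbZ : ∀ i, Δ (bZ i) = bR.dualBasis i := by
    intro i
    have h1 : κ (bZ i) = bR.dualBasis i := by
      simp [bZ, Module.Basis.map_apply]
    simpa [κ, LinearMap.linearEquivOfInjective_apply] using h1
  have hΔba : ∀ (i) (a : R), Δ (bZ i) a = bR.repr a i := by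
    intro i a; rw [hΔbZ, Module.Basis.dualBasis_apply]
  have hΔzb : ∀ (i) (z : Z), Δ z (bR i) = bZ.repr z i := by
    intro i z
    have : (Δ.flip (bR i) : Z →ₗ[F] F) = bZ.coord i := by
      apply Module.Basis.ext bZ
      intro j
      rw [LinearMap.flip_apply, hΔbZ, Module.Basis.dualBasis_apply_self, Module.Basis.coord_apply,
        Module.Basis.repr_self, Finsupp.single_apply]
      exact if_congr eq_comm rfl rfl
    simpa using congrArg (fun f : Z →ₗ[F] F => f z) this
  -- e ≠ 0
  obtain ⟨r0, hr0⟩ : ∃ r : R, r ≠ 0 := exists_ne 0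
  have he0 : e ≠ 0 := by
    intro h
    have h1 := hleft (jR r0)
    rw [h, map_zero] at h1
    exact hr0 (hjR (by simpa using h1.symm))
  obtain ⟨φ0, hφ0⟩ : ∃ φ : Module.Dual F P, φ e ≠ 0 := by
    by_contra h
    push_neg at h
    exact he0 ((Module.forall_dual_apply_eq_zero_iff F e).mp h)
  -- decomposition of P
  have hdecP : ∀ p : P, ∃ (c : F) (z : Z) (a : R), p = c • e + jZ z + jR a := by
    have htop : Submodule.span F {e} ⊔ (LinearMap.range jZ ⊔ LinearMap.range jR)
        = (⊤ : Submodule F P) := by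
      rw [← hinternal.submodule_iSup_eq_top]
      apply le_antisymm
      · apply sup_le
        · exact le_iSup ![Submodule.span F {e}, LinearMap.range jZ, LinearMap.range jR] 0
        · apply sup_le
          · exact le_iSup ![Submodule.span F {e}, LinearMap.range jZ, LinearMap.range jR] 1
          · exact le_iSup ![Submodule.span F {e}, LinearMap.range jZ, LinearMap.range jR] 2
      · apply iSup_le
        intro i
        fin_cases i
        · exact le_sup_left
        · exact le_sup_of_le_right le_sup_left
        · exact le_sup_of_le_right le_sup_right
    intro p
    have hp : p ∈ Submodule.span F {e} ⊔ (LinearMap.range jZ ⊔ LinearMap.range jR) := by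
      rw [htop]; trivial
    obtain ⟨x, hx, y, hy, hxy⟩ := Submodule.mem_sup.mp hp
    obtain ⟨c, hc⟩ := Submodule.mem_span_singleton.mp hx
    obtain ⟨y1, hy1, y2, hy2, hy12⟩ := Submodule.mem_sup.mp hy
    obtain ⟨z, hz⟩ := hy1
    obtain ⟨a, ha⟩ := hy2
    exact ⟨c, z, a, by rw [← hxy, ← hc, ← hy12, ← hz, ← ha, add_assoc]⟩
  intro E _ _ mE hmul
  set β : F →+* E := algebraMap F E with hβdef
  have hβ : Function.Injective β := β.injective
  -- 1 ⊗ e ≠ 0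
  have h1e : (1 : E) ⊗ₜ[F] e ≠ (0 : E ⊗[F] P) := by
    intro h
    have := congrArg (fun x => (Algebra.TensorProduct.rid F E E) ((LinearMap.baseChange E φ0) x)) h
    simp [Algebra.TensorProduct.rid_tmul] at this
    exact hφ0 this
  -- left identity over E
  have hleftE : ∀ y : E ⊗[F] P, mE ((1 : E) ⊗ₜ[F] e) y = y := by
    intro y
    induction y using TensorProduct.induction_on with
    | zero => simp
    | tmul b p => rw [hmul, one_mul, hleft]
    | add u v hu hv => rw [map_add, hu, hv]
  -- the operator T = right multiplication by 1 ⊗ e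
  set T : E ⊗[F] P →ₗ[E] E ⊗[F] P := mE.flip ((1 : E) ⊗ₜ[F] e) with hTdef
  have hTe : T ((1 : E) ⊗ₜ[F] e) = (1 : E) ⊗ₜ[F] e := by
    show mE _ _ = _
    rw [hmul, one_mul, hleft]
  have hTZ : ∀ ξ : E ⊗[F] Z, T (jZ.baseChange E ξ) = β ζ • jZ.baseChange E ξ := by
    intro ξ
    induction ξ using TensorProduct.induction_on with
    | zero => simp
    | tmul b z =>
      rw [LinearMap.baseChange_tmul]
      show mE _ _ = _
      rw [hmul, mul_one, hZe, TensorProduct.tmul_smul, algebraMap_smul]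
    | add u v hu hv => rw [map_add, map_add, hu, hv, ← smul_add]
  have hTR : ∀ ρ : E ⊗[F] R, T (jR.baseChange E ρ) = β α • jR.baseChange E ρ := by
    intro ρ
    induction ρ using TensorProduct.induction_on with
    | zero => simp
    | tmul b a =>
      rw [LinearMap.baseChange_tmul]
      show mE _ _ = _
      rw [hmul, mul_one, hRe, TensorProduct.tmul_smul, algebraMap_smul]
    | add u v hu hv => rw [map_add, map_add, hu, hv, ← smul_add]
  -- decomposition over E
  have hdecE : ∀ x : E ⊗[F] P, ∃ (c : E) (ξ : E ⊗[F] Z) (ρ : E ⊗[F] R),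
      x = c • ((1 : E) ⊗ₜ[F] e) + jZ.baseChange E ξ + jR.baseChange E ρ := by
    intro x
    induction x using TensorProduct.induction_on with
    | zero => exact ⟨0, 0, 0, by simp⟩
    | tmul b p =>
      obtain ⟨c, z, a, hp⟩ := hdecP p
      refine ⟨β c * b, b ⊗ₜ z, b ⊗ₜ a, ?_⟩
      have h1 : (β c * b) • ((1 : E) ⊗ₜ[F] e) = b ⊗ₜ[F] (c • e) := by
        rw [TensorProduct.tmul_smul, ← algebraMap_smul E c (b ⊗ₜ[F] e),
          TensorProduct.smul_tmul', TensorProduct.smul_tmul', smul_eq_mul, smul_eq_mul,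
          mul_one, ← hβdef]
      rw [hp, TensorProduct.tmul_add, TensorProduct.tmul_add, LinearMap.baseChange_tmul,
        LinearMap.baseChange_tmul, h1]
    | add u v hu hv =>
      obtain ⟨c1, ξ1, ρ1, h1⟩ := hu
      obtain ⟨c2, ξ2, ρ2, h2⟩ := hv
      refine ⟨c1 + c2, ξ1 + ξ2, ρ1 + ρ2, ?_⟩
      rw [h1, h2, add_smul, map_add, map_add]
      abel
  -- key pairing computations
  have key1 : ∀ (i : Fin (Module.finrank F R)) (ρ : E ⊗[F] R),
      mE ((1 : E) ⊗ₜ[F] jZ (bZ i)) (jR.baseChange E ρ)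
        = ((bR.baseChange E).repr ρ i) • ((1 : E) ⊗ₜ[F] e) := by
    intro i ρ
    induction ρ using TensorProduct.induction_on with
    | zero => simp
    | tmul b a =>
      rw [LinearMap.baseChange_tmul, hmul, one_mul, hZR, hΔba, TensorProduct.tmul_smul,
        Module.Basis.baseChange_repr_tmul]
      rw [TensorProduct.smul_tmul', TensorProduct.smul_tmul', smul_eq_mul, mul_one]
    | add u v hu hv =>
      simp only [map_add, Finsupp.add_apply, add_smul, hu, hv]
  have key2 : ∀ (i : Fin (Module.finrank F R)) (ξ : E ⊗[F] Z),
      mE (jZ.baseChange E ξ) ((1 : E) ⊗ₜ[F] jR (bR i))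
        = ((bZ.baseChange E).repr ξ i) • ((1 : E) ⊗ₜ[F] e) := by
    intro i ξ
    induction ξ using TensorProduct.induction_on with
    | zero => simp
    | tmul b z =>
      rw [LinearMap.baseChange_tmul, hmul, mul_one, hZR, hΔzb, TensorProduct.tmul_smul,
        Module.Basis.baseChange_repr_tmul]
      rw [TensorProduct.smul_tmul', TensorProduct.smul_tmul', smul_eq_mul, mul_one]
    | add u v hu hv =>
      simp only [map_add, LinearMap.add_apply, Finsupp.add_apply, add_smul, hu, hv]
  constructor
  · intro h0
    have := hleftE ((1 : E) ⊗ₜ[F] e)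
    rw [h0] at this
    simp at this
    exact h1e this.symm
  · intro I hI
    by_cases hbot : I = ⊥
    · exact Or.inl hbot
    right
    obtain ⟨x, hxI, hx0⟩ := I.ne_bot_iff.mp hbot
    suffices hemem : (1 : E) ⊗ₜ[F] e ∈ I by
      rw [Submodule.eq_top_iff']
      intro y
      have := (hI _ hemem y).1
      rwa [hleftE] at this
    obtain ⟨c, ξ, ρ, hx⟩ := hdecE x
    set s : E ⊗[F] P := c • ((1 : E) ⊗ₜ[F] e) with hsdef
    set u : E ⊗[F] P := jZ.baseChange E ξ with hudef
    set v : E ⊗[F] P := jR.baseChange E ρ with hvdef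
    have hTs : T s = s := by rw [hsdef, map_smul, hTe]
    have hTu : T u = β ζ • u := hTZ ξ
    have hTv : T v = β α • v := hTR ρ
    have hTI : ∀ w ∈ I, T w ∈ I := fun w hw => (hI w hw ((1 : E) ⊗ₜ[F] e)).1
    have hTx : T x = s + β ζ • u + β α • v := by
      rw [hx, map_add, map_add, hTs, hTu, hTv]
    have hTTx : T (T x) = s + (β ζ * β ζ) • u + (β α * β α) • v := by
      rw [hTx, map_add, map_add, hTs, map_smul, map_smul, hTu, hTv, smul_smul, smul_smul]
    -- extract s
    have hsI : s ∈ I := by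
      have h1 : T (T x) - (β ζ + β α) • T x + (β ζ * β α) • x
          = ((1 - β ζ) * (1 - β α)) • s := by
        rw [hTTx, hTx, hx]
        module
      have hmem : ((1 - β ζ) * (1 - β α)) • s ∈ I := by
        rw [← h1]
        exact I.add_mem (I.sub_mem (hTI _ (hTI _ hxI)) (I.smul_mem _ (hTI _ hxI)))
          (I.smul_mem _ hxI)
      have hc0 : ((1 - β ζ) * (1 - β α)) ≠ 0 := by
        apply mul_ne_zero <;> rw [sub_ne_zero]
        · exact fun h => hζ1 (hβ (by rw [← h, map_one]))
        · exact fun h => hα1 (hβ (by rw [← h, map_one]))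
      have := I.smul_mem ((1 - β ζ) * (1 - β α))⁻¹ hmem
      rwa [smul_smul, inv_mul_cancel₀ hc0, one_smul] at this
    -- extract u
    have huI : u ∈ I := by
      have h1 : T (T x) - (1 + β α) • T x + β α • x
          = ((β ζ - 1) * (β ζ - β α)) • u := by
        rw [hTTx, hTx, hx]
        module
      have hmem : ((β ζ - 1) * (β ζ - β α)) • u ∈ I := by
        rw [← h1]
        exact I.add_mem (I.sub_mem (hTI _ (hTI _ hxI)) (I.smul_mem _ (hTI _ hxI)))
          (I.smul_mem _ hxI)
      have hc0 : ((β ζ - 1) * (β ζ - β α)) ≠ 0 := by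
        apply mul_ne_zero <;> rw [sub_ne_zero]
        · exact fun h => hζ1 (hβ (by rw [h, map_one]))
        · exact fun h => hαζ (hβ (by rw [h]))
      have := I.smul_mem ((β ζ - 1) * (β ζ - β α))⁻¹ hmem
      rwa [smul_smul, inv_mul_cancel₀ hc0, one_smul] at this
    have hvI : v ∈ I := by
      have : v = x - s - u := by rw [hx]; abel
      rw [this]
      exact I.sub_mem (I.sub_mem hxI hsI) huI
    -- one of s, u, v is nonzero
    by_cases hs0 : s = 0
    · by_cases hu0 : u = 0
      · -- v ≠ 0
        have hv0 : v ≠ 0 := by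
          intro h
          exact hx0 (by rw [hx, hs0, hu0, h]; simp)
        have hρ0 : ρ ≠ 0 := fun h => hv0 (by rw [hvdef, h, map_zero])
        obtain ⟨i, hi⟩ : ∃ i, ((bR.baseChange E).repr ρ) i ≠ 0 := by
          by_contra h
          push_neg at h
          apply hρ0
          have : (bR.baseChange E).repr ρ = 0 := Finsupp.ext h
          simpa using congrArg (bR.baseChange E).repr.symm this
        have hmem := (hI v hvI ((1 : E) ⊗ₜ[F] jZ (bZ i))).2
        rw [hvdef, key1 i ρ] at hmem
        have := I.smul_mem (((bR.baseChange E).repr ρ) i)⁻¹ hmem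
        rwa [smul_smul, inv_mul_cancel₀ hi, one_smul] at this
      · -- u ≠ 0
        have hξ0 : ξ ≠ 0 := fun h => hu0 (by rw [hudef, h, map_zero])
        obtain ⟨i, hi⟩ : ∃ i, ((bZ.baseChange E).repr ξ) i ≠ 0 := by
          by_contra h
          push_neg at h
          apply hξ0
          have : (bZ.baseChange E).repr ξ = 0 := Finsupp.ext h
          simpa using congrArg (bZ.baseChange E).repr.symm this
        have hmem := (hI u huI ((1 : E) ⊗ₜ[F] jR (bR i))).1
        rw [hudef, key2 i ξ] at hmem
        have := I.smul_mem (((bZ.baseChange E).repr ξ) i)⁻¹ hmem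
        rwa [smul_smul, inv_mul_cancel₀ hi, one_smul] at this
    · have hc0 : c ≠ 0 := fun h => hs0 (by rw [hsdef, h, zero_smul])
      have := I.smul_mem c⁻¹ hsI
      rwa [hsdef, smul_smul, inv_mul_cancel₀ hc0, one_smul] at this
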